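/- Maximizer-cut theorem (one direction): Let f be ordinally concave on Ξ⁰ and ξ ∈ Ξ⁰. Suppose coordinate i maximizes f(ξ + χ_j) over j ∈ I ∪ {∅} (among feasible moves), and that f(ξ + χ_i) ≥ f(ξ). If ξ is not a maximizer of f, then there exists a maximizer ξ* of f over Ξ⁰ with ξ*_i ≥ ξ_i + 1. -/

import Mathlib

/-- `chi j` is the unit vector at `j` for `j = some i`, and the zero vector for `j = none`. -/
def chi {I : Type*} [DecidableEq I] : Option I → I → ℤ
  | none => fun _ => 0
  | some i => fun k => if k = i then 1 else 0

/-- `f` is ordinally concave on the domain `Ξ`. -/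
def OrdinallyConcave {I : Type*} [DecidableEq I] (Ξ : Set (I → ℤ)) (f : (I → ℤ) → ℝ) : Prop :=
  ∀ ξ ∈ Ξ, ∀ ξ' ∈ Ξ, ∀ i : I, ξ' i < ξ i →
    ∃ j : Option I, (∀ k, j = some k → ξ k < ξ' k) ∧
      ξ - chi (some i) + chi j ∈ Ξ ∧ ξ' + chi (some i) - chi j ∈ Ξ ∧
      (f ξ < f (ξ - chi (some i) + chi j) ∨
        f ξ' < f (ξ' + chi (some i) - chi j) ∨
        (f (ξ' + chi (some i) - chi j) = f ξ' ∧ f (ξ - chi (some i) + chi j) = f ξ))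

/-- maximizer-cut theorem, one direction: if
`f (ξ + χ_i) = max_{j, j'} f (ξ - χ_{j'} + χ_j)` over feasible moves, this maximum is
at least `f ξ`, and `ξ` is not a maximizer of `f` over `Ξ`, then there is a maximizer
`ξ*` of `f` over `Ξ` with `ξ*_i ≥ ξ_i + 1`. -/
theorem maximizer_cut {I : Type*} [Fintype I] [DecidableEq I]
    (Ξ : Set (I → ℤ)) (hfin : Ξ.Finite) (hpos : ∀ ξ ∈ Ξ, ∀ i, 0 ≤ ξ i)
    (f : (I → ℤ) → ℝ) (hf : OrdinallyConcave Ξ f)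
    (ξ : I → ℤ) (hξ : ξ ∈ Ξ) (i : I) (hi : ξ + chi (some i) ∈ Ξ)
    (hmaxmove : ∀ j j' : Option I, ξ - chi j' + chi j ∈ Ξ →
      f (ξ - chi j' + chi j) ≤ f (ξ + chi (some i)))
    (hge : f ξ ≤ f (ξ + chi (some i)))
    (hnotmax : ¬ ∀ ζ ∈ Ξ, f ζ ≤ f ξ) :
    ∃ ξs ∈ Ξ, (∀ ζ ∈ Ξ, f ζ ≤ f ξs) ∧ ξ i + 1 ≤ ξs i := by
  classical
  set η := ξ + chi (some i) with hηdef
  have hηi : η i = ξ i + 1 := by simp [hηdef, chi]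
  -- maximizers exist
  obtain ⟨ξ0, hξ0, hmax0⟩ : ∃ ζ ∈ Ξ, ∀ ζ' ∈ Ξ, f ζ' ≤ f ζ := by
    obtain ⟨a, ha, hm⟩ := hfin.exists_maximalFor f Ξ ⟨ξ, hξ⟩
    exact ⟨a, ha, fun b hb => by
      rcases le_total (f b) (f a) with h | h
      · exact h
      · exact hm hb h⟩
  set S : Set (I → ℤ) := {ζ ∈ Ξ | ∀ ζ' ∈ Ξ, f ζ' ≤ f ζ} with hSdef
  have hSfin : S.Finite := hfin.subset (fun x hx => hx.1)
  have hξ0S : ξ0 ∈ hSfin.toFinset := by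
    rw [Set.Finite.mem_toFinset]; exact ⟨hξ0, hmax0⟩
  set d : (I → ℤ) → ℤ := fun ζ => ∑ k, |ζ k - η k| with hddef
  obtain ⟨ξs, hξsT, hmin⟩ := Finset.exists_min_image hSfin.toFinset d ⟨ξ0, hξ0S⟩
  rw [Set.Finite.mem_toFinset] at hξsT
  obtain ⟨hξsΞ, hξsmax⟩ := hξsT
  by_cases hcase : ξ i + 1 ≤ ξs i
  · exact ⟨ξs, hξsΞ, hξsmax, hcase⟩
  exfalso
  have hξsi : ξs i < η i := by omega
  obtain ⟨j, hj, hmem1, hmem2, hc⟩ := hf η hi ξs hξsΞ i hξsi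
  have hjchi : chi j i = 0 := by
    match j with
    | none => rfl
    | some k =>
      have hk := hj k rfl
      have hne : k ≠ i := by rintro rfl; omega
      simp [chi, Ne.symm hne]
  have heq : η - chi (some i) + chi j = ξ - chi none + chi j := by
    funext k
    show ξ k + chi (some i) k - chi (some i) k + chi j k = ξ k - 0 + chi j k
    ring
  rcases hc with hc | hc | hc
  · have h1 := hmaxmove j none (heq ▸ hmem1)
    rw [← heq] at h1
    linarith
  · have h2 := hξsmax _ hmem2
    linarith
  · -- the new maximizer is strictly closer to η
    set ξt := ξs + chi (some i) - chi j with hξtdef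
    have hξtS : ξt ∈ hSfin.toFinset := by
      rw [Set.Finite.mem_toFinset]
      exact ⟨hmem2, fun ζ hζ => (hξsmax ζ hζ).trans hc.1.ge⟩
    have hle := hmin ξt hξtS
    have hlt : d ξt < d ξs := by
      apply Finset.sum_lt_sum
      · intro k _
        have hval : ξt k = ξs k + chi (some i) k - chi j k := rfl
        by_cases hki : k = i
        · subst hki
          have h1 : chi (some k) k = 1 := by simp [chi]
          rw [hval, hjchi, h1]
          simp only [Int.abs_eq_natAbs]
          omega
        · have hc1 : chi (some i) k = 0 := by simp [chi, hki]
          match j with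
          | none => simp [hval, hc1, chi, hki]
          | some k' =>
            by_cases hkk : k = k'
            · subst hkk
              have hb := hj k rfl
              have h2 : chi (some k) k = 1 := by simp [chi]
              rw [hval, hc1, h2]
              simp only [Int.abs_eq_natAbs]
              omega
            · simp [hval, hc1, chi, hki, hkk]
      · refine ⟨i, Finset.mem_univ i, ?_⟩
        have hval : ξt i = ξs i + chi (some i) i - chi j i := rfl
        have h1 : chi (some i) i = 1 := by simp [chi]
        rw [hval, hjchi, h1]
        simp only [Int.abs_eq_natAbs]
        omega
    exact absurd hle (not_le.mpr hlt)
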